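/- For every ε > 0 there exists a finite set P of at least 2 points in ℝ² such that, with distances given by the Euclidean (L2) norm, every Hamiltonian path on P has length at least (2 − ε) · w(T_min), where T_min is a minimum spanning tree of P under the Euclidean distance. -/

import Mathlib

open scoped Classical

/-- The weight of the graph `G` with respect to the (symmetric) weight function `w`. -/
noncomputable def weightOf {V : Type*} [Fintype V] (G : SimpleGraph V) (w : V → V → ℝ) : ℝ :=
  (∑ u : V, ∑ v : V, if G.Adj u v then w u v else 0) / 2

/-- The Euclidean (L2) distance between two points of `ℝ²`. -/
noncomputable def ptDist (p q : ℝ × ℝ) : ℝ := Real.sqrt ((p.1 - q.1) ^ 2 + (p.2 - q.2) ^ 2)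

/-- The length of the path visiting the points of the list `l` in order. -/
noncomputable def pathLength (l : List (ℝ × ℝ)) : ℝ :=
  ((l.zip l.tail).map (fun pq => ptDist pq.1 pq.2)).sum

section ParentTree

variable {V : Type*}

def parentGraph (f : V → V) : SimpleGraph V where
  Adj x y := x ≠ y ∧ (f x = y ∨ f y = x)
  symm := by
    refine ⟨fun x y h => ?_⟩
    exact ⟨h.1.symm, h.2.symm⟩
  loopless := ⟨fun x h => h.1 rfl⟩

variable {f : V → V} {root : V} {ρ : V → ℕ}

lemma pg_ne_root_iff (h₀ : f root = root) (hd : ∀ x, x ≠ root → ρ (f x) < ρ x) (x : V) :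
    f x ≠ x ↔ x ≠ root := by
  constructor
  · intro h hx; exact h (hx ▸ h₀)
  · intro h he; exact absurd (he ▸ hd x h) (lt_irrefl _)

lemma pg_rank_le (h₀ : f root = root) (hd : ∀ x, x ≠ root → ρ (f x) < ρ x) (x : V) :
    ρ (f x) ≤ ρ x := by
  by_cases hx : x = root
  · subst hx; rw [h₀]
  · exact (hd x hx).le

lemma pg_iter_rank_le (h₀ : f root = root) (hd : ∀ x, x ≠ root → ρ (f x) < ρ x) (n : ℕ) (x : V) :
    ρ (f^[n] x) ≤ ρ x := by
  induction n generalizing x with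
  | zero => simp
  | succ n ih =>
    rw [Function.iterate_succ_apply]
    exact (ih (f x)).trans (pg_rank_le h₀ hd x)

lemma pg_no_period (h₀ : f root = root) (hd : ∀ x, x ≠ root → ρ (f x) < ρ x)
    (x : V) (hx : x ≠ root) (n : ℕ) : f^[n+1] x ≠ x := by
  intro h
  have h1 : ρ (f^[n+1] x) ≤ ρ (f x) := by
    rw [Function.iterate_succ_apply]
    exact pg_iter_rank_le h₀ hd n (f x)
  rw [h] at h1
  exact absurd (h1.trans_lt (hd x hx)) (lt_irrefl _)

lemma pg_reachable (h₀ : f root = root) (hd : ∀ x, x ≠ root → ρ (f x) < ρ x) (x : V) :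
    (parentGraph f).Reachable x root := by
  have key : ∀ n x, ρ x ≤ n → (parentGraph f).Reachable x root := by
    intro n
    induction n with
    | zero =>
      intro x hx
      by_cases h : x = root
      · exact h ▸ SimpleGraph.Reachable.refl _
      · exact absurd ((hd x h).trans_le hx) (Nat.not_lt_zero _)
    | succ n ih =>
      intro x hx
      by_cases h : x = root
      · exact h ▸ SimpleGraph.Reachable.refl _
      · have hfx : f x ≠ x := (pg_ne_root_iff h₀ hd x).2 h
        have hadj : (parentGraph f).Adj x (f x) := ⟨(Ne.symm hfx), Or.inl rfl⟩
        have := hd x h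
        exact hadj.reachable.trans (ih (f x) (by omega))
  exact key (ρ x) x le_rfl


lemma pg_connected [Fintype V] (h₀ : f root = root) (hd : ∀ x, x ≠ root → ρ (f x) < ρ x) :
    (parentGraph f).Connected := by
  rw [SimpleGraph.connected_iff]
  refine ⟨fun u v => (pg_reachable h₀ hd u).trans (pg_reachable h₀ hd v).symm, ⟨root⟩⟩

/-- descendants invariant: walks in the graph minus the edge (x, f x) preserve
being an iterated-f-preimage of x. -/
lemma pg_bridge (h₀ : f root = root) (hd : ∀ x, x ≠ root → ρ (f x) < ρ x)
    (x : V) (hx : x ≠ root) :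
    ¬((parentGraph f) \ SimpleGraph.fromEdgeSet {s(x, f x)}).Reachable x (f x) := by
  set H := (parentGraph f) \ SimpleGraph.fromEdgeSet {s(x, f x)} with hH
  set D : V → Prop := fun y => ∃ n, f^[n] y = x with hD
  have hfx : f x ≠ x := (pg_ne_root_iff h₀ hd x).2 hx
  -- one-sided helper
  have step : ∀ a b : V, f a = b → a ≠ b → s(a, b) ≠ s(x, f x) → (D a ↔ D b) := by
    intro a b hab hne hs
    constructor
    · rintro ⟨n, hn⟩
      cases n with
      | zero =>
        simp at hn
        subst hn
        exact absurd (by rw [hab]) hs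
      | succ m =>
        rw [Function.iterate_succ_apply, hab] at hn
        exact ⟨m, hn⟩
    · rintro ⟨n, hn⟩
      refine ⟨n + 1, ?_⟩
      rw [Function.iterate_succ_apply, hab]
      exact hn
  have adjD : ∀ a b : V, H.Adj a b → (D a ↔ D b) := by
    intro a b hab
    rw [hH, SimpleGraph.sdiff_adj] at hab
    obtain ⟨⟨hne, hor⟩, hnot⟩ := hab
    have hs : s(a, b) ≠ s(x, f x) := by
      intro h
      exact hnot (by rw [SimpleGraph.fromEdgeSet_adj]; exact ⟨by simp [h], hne⟩)
    rcases hor with h | h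
    · exact step a b h hne hs
    · exact (step b a h hne.symm (by rwa [Sym2.eq_swap])).symm
  have walkD : ∀ (u v : V), H.Reachable u v → (D u ↔ D v) := by
    intro u v ⟨p⟩
    induction p with
    | nil => rfl
    | cons h p ih => exact (adjD _ _ h).trans ih
  intro hreach
  have h1 : D x := ⟨0, rfl⟩
  have h2 : D (f x) := (walkD _ _ hreach).1 h1
  obtain ⟨n, hn⟩ := h2
  rw [← Function.iterate_succ_apply] at hn
  exact pg_no_period h₀ hd x hx n hn

lemma pg_isTree [Fintype V] (h₀ : f root = root) (hd : ∀ x, x ≠ root → ρ (f x) < ρ x) :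
    (parentGraph f).IsTree := by
  rw [SimpleGraph.isTree_iff]
  refine ⟨pg_connected h₀ hd, ?_⟩
  rw [SimpleGraph.isAcyclic_iff_forall_adj_isBridge]
  intro v w hadj
  rw [SimpleGraph.isBridge_iff]
  refine ?_
  obtain ⟨hne, hor⟩ := hadj
  rcases hor with h | h
  · have hv : v ≠ root := by
      intro hv; subst hv; rw [h₀] at h; exact hne h
    rw [← h]
    exact pg_bridge h₀ hd v hv
  · have hw : w ≠ root := by
      intro hw; subst hw; rw [h₀] at h; exact hne h.symm
    have hb := pg_bridge h₀ hd w hw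
    rw [h] at hb
    intro hr
    rw [Sym2.eq_swap] at hr
    exact hb hr.symm

lemma pg_weight [Fintype V] (h₀ : f root = root) (hd : ∀ x, x ≠ root → ρ (f x) < ρ x)
    (w : V → V → ℝ) (hw : ∀ x y, w x y = w y x) :
    weightOf (parentGraph f) w = ∑ x ∈ Finset.univ.erase root, w x (f x) := by
  have noswap : ∀ u v : V, u ≠ v → f u = v → f v = u → False := by
    intro u v hne h1 h2
    have hu : u ≠ root := by
      intro hu; subst hu; rw [h₀] at h1; exact hne h1
    have hv : v ≠ root := by
      intro hv; subst hv; rw [h₀] at h2; exact hne h2.symm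
    have l1 := hd u hu; rw [h1] at l1
    have l2 := hd v hv; rw [h2] at l2
    omega
  have hsplit : ∀ u v : V, (if (parentGraph f).Adj u v then w u v else 0) =
      (if f u = v ∧ u ≠ v then w u v else 0) + (if f v = u ∧ u ≠ v then w u v else 0) := by
    intro u v
    by_cases h1 : f u = v ∧ u ≠ v
    · have h2 : ¬(f v = u ∧ u ≠ v) := by
        rintro ⟨hvu, -⟩
        exact noswap u v h1.2 h1.1 hvu
      have hadj : (parentGraph f).Adj u v := ⟨h1.2, Or.inl h1.1⟩
      rw [if_pos hadj, if_pos h1, if_neg h2]; ring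
    · by_cases h2 : f v = u ∧ u ≠ v
      · have hadj : (parentGraph f).Adj u v := ⟨h2.2, Or.inr h2.1⟩
        rw [if_pos hadj, if_neg h1, if_pos h2]; ring
      · have hadj : ¬(parentGraph f).Adj u v := by
          rintro ⟨hne, hor | hor⟩
          · exact h1 ⟨hor, hne⟩
          · exact h2 ⟨hor, hne⟩
        rw [if_neg hadj, if_neg h1, if_neg h2]; ring
  have e1 : ∀ u : V, (∑ v : V, (if f u = v ∧ u ≠ v then w u v else 0)) =
      (if u ≠ root then w u (f u) else 0) := by
    intro u
    rw [Finset.sum_eq_single (f u)]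
    · by_cases h : u = root
      · subst h; simp [h₀]
      · have hne : f u ≠ u := (pg_ne_root_iff h₀ hd u).2 h
        simp [h, Ne.symm hne]
    · intro v _ hv
      have : ¬(f u = v ∧ u ≠ v) := fun hh => hv hh.1.symm
      simp [this]
    · intro h; exact absurd (Finset.mem_univ _) h
  have e2 : ∀ v : V, (∑ u : V, (if f v = u ∧ u ≠ v then w u v else 0)) =
      (if v ≠ root then w (f v) v else 0) := by
    intro v
    rw [Finset.sum_eq_single (f v)]
    · by_cases h : v = root
      · subst h; simp [h₀]
      · have hne : f v ≠ v := (pg_ne_root_iff h₀ hd v).2 h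
        simp [h, hne]
    · intro u _ hu
      have : ¬(f v = u ∧ u ≠ v) := fun hh => hu hh.1.symm
      simp [this]
    · intro h; exact absurd (Finset.mem_univ _) h
  have erase_eq : ∀ g : V → ℝ, (∑ x : V, (if x ≠ root then g x else 0)) =
      ∑ x ∈ Finset.univ.erase root, g x := by
    intro g
    rw [← Finset.sum_filter, Finset.filter_ne']
  have main : (∑ u : V, ∑ v : V, if (parentGraph f).Adj u v then w u v else 0) =
      2 * ∑ x ∈ Finset.univ.erase root, w x (f x) := by
    calc (∑ u : V, ∑ v : V, if (parentGraph f).Adj u v then w u v else 0)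
        = (∑ u : V, ∑ v : V, ((if f u = v ∧ u ≠ v then w u v else 0) +
            (if f v = u ∧ u ≠ v then w u v else 0))) := by
          exact Finset.sum_congr rfl (fun u _ => Finset.sum_congr rfl (fun v _ => hsplit u v))
      _ = (∑ u : V, ∑ v : V, (if f u = v ∧ u ≠ v then w u v else 0)) +
          (∑ u : V, ∑ v : V, (if f v = u ∧ u ≠ v then w u v else 0)) := by
          rw [← Finset.sum_add_distrib]
          exact Finset.sum_congr rfl (fun u _ => Finset.sum_add_distrib)
      _ = (∑ u : V, (if u ≠ root then w u (f u) else 0)) +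
          (∑ v : V, (if v ≠ root then w (f v) v else 0)) := by
          rw [Finset.sum_comm (s := Finset.univ) (t := Finset.univ)
            (f := fun u v => (if f v = u ∧ u ≠ v then w u v else 0))]
          exact congrArg₂ (· + ·) (Finset.sum_congr rfl (fun u _ => e1 u))
            (Finset.sum_congr rfl (fun v _ => e2 v))
      _ = 2 * ∑ x ∈ Finset.univ.erase root, w x (f x) := by
          rw [erase_eq (fun x => w x (f x)), erase_eq (fun v => w (f v) v)]
          have : ∀ x ∈ Finset.univ.erase root, w (f x) x = w x (f x) := fun x _ => hw (f x) x
          rw [Finset.sum_congr rfl this]; ring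
  rw [weightOf, main]; ring

end ParentTree

lemma rat_den_sep (a b : ℚ) (hab : a ≠ b) :
    (1 : ℚ) / ((a.den : ℚ) * (b.den : ℚ)) ≤ |a - b| := by
  have hda : ((a.den : ℚ)) ≠ 0 := by exact_mod_cast a.den_nz
  have hdb : ((b.den : ℚ)) ≠ 0 := by exact_mod_cast b.den_nz
  have hda' : (0 : ℚ) < (a.den : ℚ) := by exact_mod_cast a.pos
  have hdb' : (0 : ℚ) < (b.den : ℚ) := by exact_mod_cast b.pos
  set z : ℤ := a.num * (b.den : ℤ) - b.num * (a.den : ℤ) with hzdef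
  have hmula : (a.num : ℚ) = a * (a.den : ℚ) := by
    have h := Rat.num_div_den a
    rw [div_eq_iff hda] at h; exact h
  have hmulb : (b.num : ℚ) = b * (b.den : ℚ) := by
    have h := Rat.num_div_den b
    rw [div_eq_iff hdb] at h; exact h
  have hz : ((z : ℚ)) = (a - b) * ((a.den : ℚ) * (b.den : ℚ)) := by
    rw [hzdef]; push_cast; rw [hmula, hmulb]; ring
  have hz0 : z ≠ 0 := by
    intro h
    rw [h] at hz
    simp only [Int.cast_zero] at hz
    have := mul_eq_zero.1 hz.symm
    rcases this with h | h
    · exact hab (sub_eq_zero.1 h)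
    · exact (mul_ne_zero hda hdb) h
  have h1 : (1 : ℚ) ≤ |(z : ℚ)| := by
    have := Int.one_le_abs hz0
    calc (1 : ℚ) = ((1 : ℤ) : ℚ) := by norm_num
      _ ≤ ((|z| : ℤ) : ℚ) := by exact_mod_cast this
      _ = |(z : ℚ)| := by push_cast; ring
  rw [hz] at h1
  rw [abs_mul] at h1
  rw [abs_of_pos (mul_pos hda' hdb')] at h1
  rw [div_le_iff₀ (mul_pos hda' hdb')]
  linarith

lemma zip_mem_facts : ∀ (l : List (ℝ × ℝ)), l.Nodup → ∀ a b : ℝ × ℝ,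
    (a, b) ∈ l.zip l.tail → a ≠ b ∧ a ∈ l ∧ b ∈ l := by
  intro l
  induction l with
  | nil => intro _ a b h; simp at h
  | cons x t ih =>
    intro hnd a b h
    cases t with
    | nil => simp at h
    | cons y t' =>
      simp only [List.tail_cons, List.zip_cons_cons, List.mem_cons] at h
      rcases h with h | h
      · rw [Prod.mk.injEq] at h
        obtain ⟨ha, hb⟩ := h
        subst ha; subst hb
        refine ⟨?_, List.mem_cons_self, List.mem_cons_of_mem _ List.mem_cons_self⟩
        intro hxy
        rw [hxy] at hnd
        exact hnd.notMem List.mem_cons_self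
      · have := ih hnd.of_cons a b (by simpa using h)
        exact ⟨this.1, List.mem_cons_of_mem _ this.2.1, List.mem_cons_of_mem _ this.2.2⟩

/-- sum over consecutive pairs of (f a + f b) -/
lemma zipsum_eq (f : ℝ × ℝ → ℝ) : ∀ (l : List (ℝ × ℝ)) (x : ℝ × ℝ),
    (((x :: l).zip l).map (fun pq => f pq.1 + f pq.2)).sum + f x + f (l.getLastD x)
      = 2 * (((x :: l).map f).sum) := by
  intro l
  induction l with
  | nil => intro x; simp; ring
  | cons y t ih =>
    intro x
    have hy := ih y
    simp only [List.zip_cons_cons, List.map_cons, List.sum_cons, List.getLastD_cons] at *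
    linarith

section Construction

noncomputable def xq (M : ℕ) (j : Fin (M+1)) : ℚ := (j : ℕ) / (M : ℚ)

noncomputable def rad (M : ℕ) (j : Fin (M+1)) : ℝ := 1 / (2 * ((xq M j).den : ℝ)^2)

noncomputable def emb (M : ℕ) : Fin (M+1) ⊕ Fin (M+1) → ℝ × ℝ :=
  Sum.elim (fun j => (((xq M j : ℚ) : ℝ), 0)) (fun j => (((xq M j : ℚ) : ℝ), rad M j))

noncomputable def Pset (M : ℕ) : Finset (ℝ × ℝ) := Finset.image (emb M) Finset.univ

variable {M : ℕ}

lemma rad_pos (j : Fin (M+1)) : 0 < rad M j := by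
  have : (0:ℝ) < ((xq M j).den : ℝ) := by exact_mod_cast (xq M j).pos
  rw [rad]; positivity

lemma rad_le_half (j : Fin (M+1)) : rad M j ≤ 1/2 := by
  have h1 : (1:ℝ) ≤ ((xq M j).den : ℝ) := by exact_mod_cast (xq M j).pos
  rw [rad]
  rw [div_le_div_iff₀ (by nlinarith) (by norm_num)]
  nlinarith

lemma xq_inj (hM : 1 ≤ M) {j k : Fin (M+1)} (h : xq M j = xq M k) : j = k := by
  have hM0 : ((M:ℚ)) ≠ 0 := by
    simp only [ne_eq, Nat.cast_eq_zero]; omega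
  rw [xq, xq, div_eq_div_iff hM0 hM0] at h
  have h2 : ((j:ℕ):ℚ) * (M:ℚ) = ((k:ℕ):ℚ) * (M:ℚ) := h
  have h3 : ((j:ℕ):ℚ) = ((k:ℕ):ℚ) := mul_right_cancel₀ hM0 h2
  have : (j:ℕ) = (k:ℕ) := by exact_mod_cast h3
  exact Fin.ext this

lemma center_sep (hM : 1 ≤ M) {j k : Fin (M+1)} (h : j ≠ k) :
    4 * rad M j * rad M k ≤ (((xq M j : ℚ) : ℝ) - ((xq M k : ℚ) : ℝ))^2 := by
  set a := xq M j
  set b := xq M k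
  have hab : a ≠ b := fun hh => h (xq_inj hM hh)
  have hsep := rat_den_sep a b hab
  have hsep' : (1 : ℝ) / ((a.den : ℝ) * (b.den : ℝ)) ≤ |(a:ℝ) - (b:ℝ)| := by
    have := hsep
    have h2 : ((1 / ((a.den : ℚ) * (b.den : ℚ)) : ℚ) : ℝ) ≤ ((|a - b| : ℚ) : ℝ) := by
      exact_mod_cast this
    rw [Rat.cast_abs] at h2
    push_cast at h2 ⊢
    convert h2 using 2
  have hda : (0:ℝ) < (a.den : ℝ) := by exact_mod_cast a.pos
  have hdb : (0:ℝ) < (b.den : ℝ) := by exact_mod_cast b.pos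
  have hnn : (0:ℝ) ≤ 1 / ((a.den : ℝ) * (b.den : ℝ)) := by positivity
  have hsq : (1 / ((a.den : ℝ) * (b.den : ℝ)))^2 ≤ |(a:ℝ) - (b:ℝ)|^2 := by
    exact pow_le_pow_left₀ hnn hsep' 2
  rw [sq_abs] at hsq
  calc 4 * rad M j * rad M k = (1 / ((a.den : ℝ) * (b.den : ℝ)))^2 := by
        rw [rad, rad]; field_simp; ring
    _ ≤ ((a:ℝ) - (b:ℝ))^2 := hsq


lemma emb_inj (hM : 1 ≤ M) : Function.Injective (emb M) := by
  intro i i' h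
  have hx : ∀ j : Fin (M+1), (emb M (Sum.inl j)).2 = 0 := fun j => rfl
  cases i with
  | inl j =>
    cases i' with
    | inl k =>
      have h1 : ((xq M j : ℚ) : ℝ) = ((xq M k : ℚ) : ℝ) := congrArg Prod.fst h
      have : xq M j = xq M k := by exact_mod_cast h1
      rw [xq_inj hM this]
    | inr k =>
      have h2 : (0:ℝ) = rad M k := congrArg Prod.snd h
      exact absurd h2.symm (ne_of_gt (rad_pos k))
  | inr j =>
    cases i' with
    | inl k =>
      have h2 : rad M j = (0:ℝ) := congrArg Prod.snd h
      exact absurd h2 (ne_of_gt (rad_pos j))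
    | inr k =>
      have h1 : ((xq M j : ℚ) : ℝ) = ((xq M k : ℚ) : ℝ) := congrArg Prod.fst h
      have : xq M j = xq M k := by exact_mod_cast h1
      rw [xq_inj hM this]

lemma snd_nonneg_emb (i : Fin (M+1) ⊕ Fin (M+1)) : 0 ≤ (emb M i).2 := by
  cases i with
  | inl j => exact le_refl 0
  | inr j => exact (rad_pos j).le

lemma keyP (hM : 1 ≤ M) (i i' : Fin (M+1) ⊕ Fin (M+1)) (h : emb M i ≠ emb M i') :
    (emb M i).2 + (emb M i').2 ≤ ptDist (emb M i) (emb M i') := by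
  cases i with
  | inl j =>
    cases i' with
    | inl k =>
      simp only [emb, Sum.elim_inl, ptDist]
      simpa using Real.sqrt_nonneg _
    | inr k =>
      simp only [emb, Sum.elim_inl, Sum.elim_inr, ptDist]
      rw [zero_add]
      rw [Real.le_sqrt (rad_pos k).le (by positivity)]
      nlinarith [sq_nonneg (((xq M j : ℚ) : ℝ) - ((xq M k : ℚ) : ℝ))]
  | inr j =>
    cases i' with
    | inl k =>
      simp only [emb, Sum.elim_inl, Sum.elim_inr, ptDist]
      rw [add_zero]
      rw [Real.le_sqrt (rad_pos j).le (by positivity)]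
      nlinarith [sq_nonneg (((xq M j : ℚ) : ℝ) - ((xq M k : ℚ) : ℝ))]
    | inr k =>
      have hjk : j ≠ k := by
        intro hh; exact h (by rw [hh])
      have hs := center_sep hM hjk
      simp only [emb, Sum.elim_inr, ptDist]
      rw [Real.le_sqrt (add_pos (rad_pos j) (rad_pos k)).le (by positivity)]
      nlinarith [hs]


lemma ptDist_comm (p q : ℝ × ℝ) : ptDist p q = ptDist q p := by
  rw [ptDist, ptDist]; ring_nf

def pd (M : ℕ) (j : Fin (M+1)) : Fin (M+1) := ⟨j.val - 1, lt_of_le_of_lt (Nat.sub_le _ _) j.isLt⟩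

def parentI (M : ℕ) : Fin (M+1) ⊕ Fin (M+1) → Fin (M+1) ⊕ Fin (M+1) :=
  Sum.elim (fun j => Sum.inl (pd M j)) (fun j => Sum.inl j)

def rootI (M : ℕ) : Fin (M+1) ⊕ Fin (M+1) := Sum.inl ⟨0, Nat.succ_pos M⟩

def rankI (M : ℕ) : Fin (M+1) ⊕ Fin (M+1) → ℕ :=
  Sum.elim (fun j => j.val) (fun j => M + 1 + j.val)

lemma parentI_root : parentI M (rootI M) = rootI M := by
  simp only [parentI, rootI, Sum.elim_inl, pd]

lemma parentI_desc (i : Fin (M+1) ⊕ Fin (M+1)) (h : i ≠ rootI M) :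
    rankI M (parentI M i) < rankI M i := by
  cases i with
  | inl j =>
    have hj : j.val ≠ 0 := by
      intro hh
      exact h (by simp only [rootI]; congr 1; exact Fin.ext hh)
    simp only [parentI, rankI, Sum.elim_inl, pd]
    omega
  | inr j =>
    simp only [parentI, rankI, Sum.elim_inl, Sum.elim_inr]
    omega

lemma spoke_dist (j : Fin (M+1)) :
    ptDist (emb M (Sum.inr j)) (emb M (Sum.inl j)) = rad M j := by
  simp only [emb, Sum.elim_inl, Sum.elim_inr, ptDist]
  rw [sub_self, sub_zero]
  have : (0:ℝ)^2 + (rad M j)^2 = (rad M j)^2 := by ring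
  rw [this, Real.sqrt_sq (rad_pos j).le]

lemma spine_dist (hM : 1 ≤ M) (j : Fin (M+1)) (hj : j.val ≠ 0) :
    ptDist (emb M (Sum.inl j)) (emb M (Sum.inl (pd M j))) = 1 / M := by
  have hM0 : ((M:ℝ)) ≠ 0 := by
    simp only [ne_eq, Nat.cast_eq_zero]; omega
  have hx : ((xq M j : ℚ) : ℝ) - ((xq M (pd M j) : ℚ) : ℝ) = 1 / M := by
    simp only [xq, pd]
    push_cast
    have h1 : ((j.val - 1 : ℕ) : ℝ) = (j.val : ℝ) - 1 := by
      have : 1 ≤ j.val := Nat.one_le_iff_ne_zero.2 hj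
      push_cast [this]
      ring
    rw [h1]
    field_simp
    ring
  simp only [emb, Sum.elim_inl, ptDist]
  rw [hx, sub_self]
  have hMpos : (0:ℝ) < (M:ℝ) := by
    have : (0:ℕ) < M := hM
    exact_mod_cast this
  have h2 : (1/(M:ℝ))^2 + (0:ℝ)^2 = (1/(M:ℝ))^2 := by ring
  rw [h2, Real.sqrt_sq (by positivity)]

lemma tree_sum (hM : 1 ≤ M) :
    ∑ i ∈ Finset.univ.erase (rootI M),
      ptDist (emb M i) (emb M (parentI M i)) = 1 + ∑ j : Fin (M+1), rad M j := by
  have hM0 : ((M:ℝ)) ≠ 0 := by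
    simp only [ne_eq, Nat.cast_eq_zero]; omega
  rw [← Finset.filter_ne', Finset.sum_filter]
  rw [Fintype.sum_sum_type]
  have h1 : (∑ j : Fin (M+1), if Sum.inl j ≠ rootI M then
      ptDist (emb M (Sum.inl j)) (emb M (parentI M (Sum.inl j))) else 0) = 1 := by
    have hcong : ∀ j : Fin (M+1), (if Sum.inl j ≠ rootI M then
        ptDist (emb M (Sum.inl j)) (emb M (parentI M (Sum.inl j))) else 0)
        = (if j ≠ (⟨0, Nat.succ_pos M⟩ : Fin (M+1)) then (1/(M:ℝ)) else 0) := by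
      intro j
      by_cases hj : j = (⟨0, Nat.succ_pos M⟩ : Fin (M+1))
      · subst hj
        simp [rootI]
      · have hval : j.val ≠ 0 := by
          intro hh; exact hj (Fin.ext hh)
        have hcond : Sum.inl j ≠ rootI M := by
          simp only [rootI, ne_eq, Sum.inl.injEq]
          exact hj
        rw [if_pos hcond, if_pos hj]
        have : parentI M (Sum.inl j) = Sum.inl (pd M j) := rfl
        rw [this, spine_dist hM j hval]
    rw [Finset.sum_congr rfl (fun j _ => hcong j)]
    rw [← Finset.sum_filter, Finset.filter_ne', Finset.sum_const]
    rw [Finset.card_erase_of_mem (Finset.mem_univ _)]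
    simp only [Finset.card_univ, Fintype.card_fin]
    rw [nsmul_eq_mul]
    field_simp
    simp
  have h2 : (∑ j : Fin (M+1), if Sum.inr j ≠ rootI M then
      ptDist (emb M (Sum.inr j)) (emb M (parentI M (Sum.inr j))) else 0)
      = ∑ j : Fin (M+1), rad M j := by
    refine Finset.sum_congr rfl (fun j _ => ?_)
    have hcond : (Sum.inr j : Fin (M+1) ⊕ Fin (M+1)) ≠ rootI M := by
      simp [rootI]
    rw [if_pos hcond]
    have : parentI M (Sum.inr j) = Sum.inl j := rfl
    rw [this, spoke_dist j]
  rw [h1, h2]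


lemma exists_good_tree (hM : 1 ≤ M) :
    ∃ G : SimpleGraph ((Pset M : Finset (ℝ × ℝ)) : Type),
      G.IsTree ∧
      weightOf G (fun p q => ptDist p.1 q.1) = 1 + ∑ j : Fin (M+1), rad M j := by
  have hmem : ∀ i, emb M i ∈ Pset M := fun i => Finset.mem_image_of_mem _ (Finset.mem_univ i)
  set toP : (Fin (M+1) ⊕ Fin (M+1)) → ((Pset M : Finset (ℝ × ℝ)) : Type) :=
    fun i => ⟨emb M i, hmem i⟩ with htoP
  have hbij : Function.Bijective toP := by
    constructor
    · intro i i' h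
      exact emb_inj hM (congrArg Subtype.val h)
    · rintro ⟨v, hv⟩
      obtain ⟨i, -, hi⟩ := Finset.mem_image.1 hv
      exact ⟨i, Subtype.ext hi⟩
  set e := Equiv.ofBijective toP hbij with he
  set f : ((Pset M : Finset (ℝ × ℝ)) : Type) → ((Pset M : Finset (ℝ × ℝ)) : Type) :=
    fun p => e (parentI M (e.symm p)) with hf
  set rootP := e (rootI M) with hrootP
  have h₀ : f rootP = rootP := by
    rw [hf, hrootP]
    simp only [Equiv.symm_apply_apply]
    rw [parentI_root]
  have hd : ∀ p, p ≠ rootP → (rankI M (e.symm (f p))) < rankI M (e.symm p) := by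
    intro p hp
    rw [hf]
    simp only [Equiv.symm_apply_apply]
    apply parentI_desc
    intro hh
    exact hp (by rw [hrootP, ← hh, Equiv.apply_symm_apply])
  refine ⟨parentGraph f, pg_isTree (ρ := fun p => rankI M (e.symm p)) h₀ hd, ?_⟩
  rw [pg_weight (ρ := fun p => rankI M (e.symm p)) h₀ hd _
    (fun x y => ptDist_comm x.1 y.1)]
  rw [← tree_sum hM]
  refine Finset.sum_equiv e.symm ?_ ?_
  · intro p
    simp only [Finset.mem_erase, Finset.mem_univ, and_true]
    constructor
    · intro h hh
      exact h (by rw [hrootP, ← hh, Equiv.apply_symm_apply])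
    · intro h hh
      exact h (by rw [hh, hrootP, Equiv.symm_apply_apply])
  · intro p _
    have hp : p = e (e.symm p) := (Equiv.apply_symm_apply e p).symm
    rw [hp, hf]
    simp only [Equiv.symm_apply_apply]
    rfl


lemma exists_large_S (C : ℝ) : ∃ M : ℕ, 1 ≤ M ∧ C ≤ ∑ j : Fin (M+1), rad M j := by
  classical
  set g : ℕ → ℝ := Set.indicator {p | Nat.Prime p} (fun n => 1/(n:ℝ)) with hgdef
  have hg0 : 0 ≤ g := fun n => Set.indicator_nonneg (fun x _ => by positivity) n
  have hex : ∃ u : Finset ℕ, 4*C < ∑ x ∈ u, g x := by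
    by_contra h
    push_neg at h
    exact not_summable_one_div_on_primes (summable_of_sum_le hg0 h)
  obtain ⟨u, hu⟩ := hex
  set N := u.sup id with hN
  set M := N.factorial with hM
  have hM1 : 1 ≤ M := N.factorial_pos
  refine ⟨M, hM1, ?_⟩
  have hMQ : ((M:ℚ)) ≠ 0 :=
    Nat.cast_ne_zero.2 (Nat.one_le_iff_ne_zero.1 hM1)
  -- the prime index set
  set uP := u.filter Nat.Prime with huP
  have hqfacts : ∀ q ∈ uP, 2 ≤ q ∧ q ∣ M := by
    intro q hq
    rw [huP, Finset.mem_filter] at hq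
    refine ⟨hq.2.two_le, ?_⟩
    rw [hM]
    exact Nat.dvd_factorial hq.2.pos (Finset.le_sup (f := id) hq.1)
  set T : Finset (ℕ × ℕ) := uP.biUnion (fun q => (Finset.Ico 1 q).image (fun p => (q, p)))
    with hT
  have hTmem : ∀ qp ∈ T, qp.1 ∈ uP ∧ 1 ≤ qp.2 ∧ qp.2 < qp.1 := by
    intro qp hqp
    rw [hT, Finset.mem_biUnion] at hqp
    obtain ⟨q, hq, hmem⟩ := hqp
    rw [Finset.mem_image] at hmem
    obtain ⟨p, hp, hpe⟩ := hmem
    rw [Finset.mem_Ico] at hp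
    rw [← hpe]
    exact ⟨hq, hp.1, hp.2⟩
  set φ : ℕ × ℕ → Fin (M+1) :=
    fun qp => ⟨min (qp.2 * (M / qp.1)) M, lt_of_le_of_lt (min_le_right _ _) (Nat.lt_succ_self M)⟩
    with hφ
  have hval : ∀ qp ∈ T, (φ qp).val = qp.2 * (M / qp.1) := by
    intro qp hqp
    obtain ⟨hq, hp1, hplt⟩ := hTmem qp hqp
    obtain ⟨h2q, hdvd⟩ := hqfacts _ hq
    have hle : qp.2 * (M / qp.1) ≤ M := by
      calc qp.2 * (M / qp.1) ≤ qp.1 * (M / qp.1) := Nat.mul_le_mul_right _ (le_of_lt hplt)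
        _ = M := Nat.mul_div_cancel' hdvd
    simp [hφ, hle]
  have hxqval : ∀ qp ∈ T, xq M (φ qp) = ((qp.2 : ℚ)) / ((qp.1 : ℚ)) := by
    intro qp hqp
    obtain ⟨hq, hp1, hplt⟩ := hTmem qp hqp
    obtain ⟨h2q, hdvd⟩ := hqfacts _ hq
    have hq0 : ((qp.1 : ℚ)) ≠ 0 := by
      simp only [ne_eq, Nat.cast_eq_zero]; omega
    rw [xq, hval qp hqp, div_eq_div_iff hMQ hq0]
    have hnat : qp.2 * (M / qp.1) * qp.1 = qp.2 * M := by
      rw [mul_assoc, Nat.div_mul_cancel hdvd]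
    exact_mod_cast congrArg (fun n : ℕ => (n : ℚ)) hnat
  have hradlb : ∀ qp ∈ T, 1/(2*(qp.1:ℝ)^2) ≤ rad M (φ qp) := by
    intro qp hqp
    obtain ⟨hq, hp1, hplt⟩ := hTmem qp hqp
    obtain ⟨h2q, hdvd⟩ := hqfacts _ hq
    have hden : ((xq M (φ qp)).den : ℕ) ≤ qp.1 := by
      rw [hxqval qp hqp]
      have hdvd2 : (((((qp.2:ℚ))/((qp.1:ℚ))).den : ℤ)) ∣ (qp.1 : ℤ) := by
        have := Rat.den_dvd (qp.2 : ℤ) (qp.1 : ℤ)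
        rwa [Rat.divInt_eq_div, Int.cast_natCast, Int.cast_natCast] at this
      have := Int.le_of_dvd (by exact_mod_cast (by omega : (0:ℕ) < qp.1)) hdvd2
      exact_mod_cast this
    rw [rad]
    have hd1 : (1:ℝ) ≤ ((xq M (φ qp)).den : ℝ) := by exact_mod_cast (xq M (φ qp)).pos
    have hdle : ((xq M (φ qp)).den : ℝ) ≤ (qp.1 : ℝ) := by exact_mod_cast hden
    apply div_le_div_of_nonneg_left (by norm_num) (by nlinarith) (by nlinarith)
  have hinj : Set.InjOn φ T := by
    intro qp hqp qp' hqp' heq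
    obtain ⟨hq, hp1, hplt⟩ := hTmem qp (by exact hqp)
    obtain ⟨hq', hp1', hplt'⟩ := hTmem qp' (by exact hqp')
    obtain ⟨h2q, hdvd⟩ := hqfacts _ hq
    obtain ⟨h2q', hdvd'⟩ := hqfacts _ hq'
    have hqprime : Nat.Prime qp.1 := by
      rw [huP, Finset.mem_filter] at hq; exact hq.2
    have hqprime' : Nat.Prime qp'.1 := by
      rw [huP, Finset.mem_filter] at hq'; exact hq'.2
    have h1 : qp.2 * (M / qp.1) = qp'.2 * (M / qp'.1) := by
      have := congrArg Fin.val heq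
      rwa [hval qp (by exact hqp), hval qp' (by exact hqp')] at this
    have h2 : qp.2 * qp'.1 = qp'.2 * qp.1 := by
      have hmul : qp.2 * (M / qp.1) * (qp.1 * qp'.1) = qp'.2 * (M / qp'.1) * (qp.1 * qp'.1) := by
        rw [h1]
      have e1 : qp.2 * (M / qp.1) * (qp.1 * qp'.1) = qp.2 * qp'.1 * M := by
        rw [show qp.2 * (M / qp.1) * (qp.1 * qp'.1) = qp.2 * qp'.1 * (M / qp.1 * qp.1) by ring,
          Nat.div_mul_cancel hdvd]
      have e2 : qp'.2 * (M / qp'.1) * (qp.1 * qp'.1) = qp'.2 * qp.1 * M := by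
        rw [show qp'.2 * (M / qp'.1) * (qp.1 * qp'.1) = qp'.2 * qp.1 * (M / qp'.1 * qp'.1) by ring,
          Nat.div_mul_cancel hdvd']
      rw [e1, e2] at hmul
      exact Nat.eq_of_mul_eq_mul_right (by omega) hmul
    have hqq : qp.1 = qp'.1 := by
      have hdvdq : qp.1 ∣ qp.2 * qp'.1 := ⟨qp'.2, by rw [h2]; ring⟩
      rcases (Nat.Prime.dvd_mul hqprime).1 hdvdq with h | h
      · exact absurd h (Nat.not_dvd_of_pos_of_lt (by omega) hplt)
      · exact (Nat.prime_dvd_prime_iff_eq hqprime hqprime').1 h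
    have hpp : qp.2 = qp'.2 := by
      rw [hqq] at h2
      exact Nat.eq_of_mul_eq_mul_right (by omega) h2
    exact Prod.ext hqq hpp
  -- chain of inequalities
  have step1 : ∑ qp ∈ T, (1/(2*(qp.1:ℝ)^2)) ≤ ∑ j : Fin (M+1), rad M j := by
    calc ∑ qp ∈ T, (1/(2*(qp.1:ℝ)^2)) ≤ ∑ qp ∈ T, rad M (φ qp) :=
          Finset.sum_le_sum hradlb
      _ = ∑ j ∈ T.image φ, rad M j := (Finset.sum_image (fun x hx y hy h => hinj hx hy h)).symm
      _ ≤ ∑ j : Fin (M+1), rad M j := by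
          apply Finset.sum_le_sum_of_subset_of_nonneg (Finset.subset_univ _)
          intro j _ _
          exact (rad_pos j).le
  have step2 : (1/4) * (∑ x ∈ u, g x) ≤ ∑ qp ∈ T, (1/(2*(qp.1:ℝ)^2)) := by
    have hdisj : ∀ q ∈ uP, ∀ q' ∈ uP, q ≠ q' → Disjoint
        ((Finset.Ico 1 q).image (fun p => (q, p)))
        ((Finset.Ico 1 q').image (fun p => (q', p))) := by
      intro q _ q' _ hne
      rw [Finset.disjoint_left]
      intro a ha ha'
      rw [Finset.mem_image] at ha ha'
      obtain ⟨p, -, hp⟩ := ha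
      obtain ⟨p', -, hp'⟩ := ha'
      rw [← hp] at hp'
      exact hne (congrArg Prod.fst hp').symm
    rw [hT, Finset.sum_biUnion hdisj]
    have hterm : ∀ q ∈ uP, (1/4) * (1/(q:ℝ)) ≤
        ∑ qp ∈ (Finset.Ico 1 q).image (fun p => (q, p)), (1/(2*(qp.1:ℝ)^2)) := by
      intro q hq
      obtain ⟨h2q, -⟩ := hqfacts q hq
      rw [Finset.sum_image (by intro x _ y _ h; exact (Prod.mk.injEq .. ▸ h).2)]
      simp only [Finset.sum_const, Nat.card_Ico]
      rw [nsmul_eq_mul]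
      have hqR : (2:ℝ) ≤ (q:ℝ) := by exact_mod_cast h2q
      have hq1 : ((q - 1 : ℕ) : ℝ) = (q:ℝ) - 1 := by
        have : 1 ≤ q := by omega
        push_cast [this]; ring
      rw [hq1]
      have h0 : (0:ℝ) < (q:ℝ) := by linarith
      rw [show (1:ℝ)/4 * (1/(q:ℝ)) = 1/(4*(q:ℝ)) by field_simp,
        show ((q:ℝ)-1) * (1/(2*(q:ℝ)^2)) = ((q:ℝ)-1)/(2*(q:ℝ)^2) by ring,
        div_le_div_iff₀ (by linarith) (by nlinarith)]
      nlinarith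
    have hsum2 : ∑ x ∈ u, g x = ∑ q ∈ uP, (1/(q:ℝ)) := by
      rw [huP, Finset.sum_filter]
      refine Finset.sum_congr rfl (fun n _ => ?_)
      rw [hgdef]
      simp [Set.indicator_apply]
    rw [hsum2, Finset.mul_sum]
    exact Finset.sum_le_sum hterm
  have : C ≤ (1/4) * (∑ x ∈ u, g x) := by linarith
  linarith


lemma ptDist_nonneg (p q : ℝ × ℝ) : 0 ≤ ptDist p q := Real.sqrt_nonneg _

lemma weightOf_nonneg {V : Type*} [Fintype V] (G : SimpleGraph V) (w : V → V → ℝ)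
    (hw : ∀ x y, 0 ≤ w x y) : 0 ≤ weightOf G w := by
  rw [weightOf]
  apply div_nonneg _ (by norm_num)
  apply Finset.sum_nonneg
  intro u _
  apply Finset.sum_nonneg
  intro v _
  split_ifs
  · exact hw u v
  · exact le_refl 0

lemma snd_sum_P (hM : 1 ≤ M) : ∑ p ∈ Pset M, p.2 = ∑ j : Fin (M+1), rad M j := by
  rw [Pset, Finset.sum_image (fun x _ y _ h => emb_inj hM h)]
  rw [Fintype.sum_sum_type]
  have h1 : ∀ j : Fin (M+1), (emb M (Sum.inl j)).2 = 0 := fun j => rfl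
  have h2 : ∀ j : Fin (M+1), (emb M (Sum.inr j)).2 = rad M j := fun j => rfl
  simp only [h1, h2, Finset.sum_const_zero, zero_add]

lemma snd_le_half (p : ℝ × ℝ) (hp : p ∈ Pset M) : p.2 ≤ 1/2 := by
  rw [Pset, Finset.mem_image] at hp
  obtain ⟨i, -, hi⟩ := hp
  rw [← hi]
  cases i with
  | inl j => norm_num [emb]
  | inr j => exact rad_le_half j

lemma keyPP (hM : 1 ≤ M) (p q : ℝ × ℝ) (hp : p ∈ Pset M) (hq : q ∈ Pset M) (hne : p ≠ q) :
    p.2 + q.2 ≤ ptDist p q := by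
  rw [Pset, Finset.mem_image] at hp hq
  obtain ⟨i, -, hi⟩ := hp
  obtain ⟨i', -, hi'⟩ := hq
  rw [← hi, ← hi']
  exact keyP hM i i' (by rw [hi, hi']; exact hne)

lemma path_lb (hM : 1 ≤ M) (l : List (ℝ × ℝ)) (hnd : l.Nodup) (htf : l.toFinset = Pset M) :
    2 * (∑ j : Fin (M+1), rad M j) - 1 ≤ pathLength l := by
  have hmemP : ∀ p ∈ l, p ∈ Pset M := by
    intro p hp
    rw [← htf]
    exact List.mem_toFinset.2 hp
  have hne : l ≠ [] := by
    intro h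
    have : emb M (rootI M) ∈ Pset M := Finset.mem_image_of_mem _ (Finset.mem_univ _)
    rw [← htf, h] at this
    simp at this
  obtain ⟨x, t, rfl⟩ := List.exists_cons_of_ne_nil hne
  have hstep : (((x :: t).zip t).map (fun pq => pq.1.2 + pq.2.2)).sum ≤ pathLength (x :: t) := by
    rw [pathLength]
    simp only [List.tail_cons]
    apply List.sum_le_sum
    intro pq hpq
    obtain ⟨hne', hm1, hm2⟩ := zip_mem_facts (x :: t) hnd pq.1 pq.2 (by
      simpa using hpq)
    exact keyPP hM pq.1 pq.2 (hmemP _ hm1) (hmemP _ hm2) hne'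
  have hzip := zipsum_eq Prod.snd t x
  have hsum : (((x :: t)).map Prod.snd).sum = ∑ j : Fin (M+1), rad M j := by
    rw [← List.sum_toFinset _ hnd, htf, snd_sum_P hM]
  have hx : x.2 ≤ 1/2 := snd_le_half x (hmemP _ List.mem_cons_self)
  have hlast : (t.getLastD x).2 ≤ 1/2 :=
    snd_le_half _ (hmemP _ (List.getLastD_mem_cons (l := t) (a := x)))
  have heq : (((x :: t).zip t).map (fun pq => pq.1.2 + pq.2.2)).sum
      = (((x :: t).zip t).map (fun pq => Prod.snd pq.1 + Prod.snd pq.2)).sum := rfl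
  rw [heq] at hstep
  rw [hsum] at hzip
  linarith

end Construction


/-- For every `ε > 0` there is a finite set `P` of at least two points of `ℝ²` such that,
with the Euclidean (L2) distance, every Hamiltonian path on `P` (an enumeration of `P` without
repetition) has length at least `(2 − ε)` times the weight of any minimum spanning tree
of `P`. -/
theorem stmt13 (ε : ℝ) (hε : 0 < ε) :
    ∃ P : Finset (ℝ × ℝ), 2 ≤ P.card ∧
      ∀ Tmin : SimpleGraph P, Tmin.IsTree →
        (∀ T'' : SimpleGraph P, T''.IsTree →
          weightOf Tmin (fun p q => ptDist p.1 q.1) ≤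
            weightOf T'' (fun p q => ptDist p.1 q.1)) →
        ∀ l : List (ℝ × ℝ), l.Nodup → l.toFinset = P →
          (2 - ε) * weightOf Tmin (fun p q => ptDist p.1 q.1) ≤ pathLength l := by
  obtain ⟨M, hM, hS⟩ := exists_large_S (3/ε)
  set SQ := ∑ j : Fin (M+1), rad M j with hSQ
  refine ⟨Pset M, ?_, ?_⟩
  · rw [Pset, Finset.card_image_of_injective _ (emb_inj hM)]
    simp only [Finset.card_univ, Fintype.card_sum, Fintype.card_fin]
    omega
  · intro Tmin htree hmin l hnd htf
    obtain ⟨G, hGtree, hGw⟩ := exists_good_tree hM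
    have hub : weightOf Tmin (fun p q => ptDist p.1 q.1) ≤ 1 + SQ := by
      rw [← hGw]
      exact hmin G hGtree
    have hlb := path_lb hM l hnd htf
    have hw0 : 0 ≤ weightOf Tmin (fun p q => ptDist p.1 q.1) :=
      weightOf_nonneg _ _ (fun x y => ptDist_nonneg _ _)
    have hpl0 : 0 ≤ pathLength l := by
      rw [pathLength]
      apply List.sum_nonneg
      intro y hy
      rw [List.mem_map] at hy
      obtain ⟨pq, -, hpq⟩ := hy
      rw [← hpq]
      exact ptDist_nonneg _ _
    rcases le_or_gt (2 - ε) 0 with h | h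
    · have h1 : (2 - ε) * weightOf Tmin (fun p q => ptDist p.1 q.1) ≤ 0 :=
        mul_nonpos_of_nonpos_of_nonneg h hw0
      linarith
    · have hεS : 3 ≤ ε * SQ := by
        have h1 : ε * (3/ε) ≤ ε * SQ := mul_le_mul_of_nonneg_left hS hε.le
        have h2 : ε * (3/ε) = 3 := by field_simp
        linarith
      calc (2 - ε) * weightOf Tmin (fun p q => ptDist p.1 q.1)
          ≤ (2 - ε) * (1 + SQ) := mul_le_mul_of_nonneg_left hub h.le
        _ ≤ 2 * SQ - 1 := by nlinarith
        _ ≤ pathLength l := hlb
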